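/- Let D be a bounded open subset of ℂ and A a nonempty closed subset of the closure of D. Suppose that for every continuous function f : ℂ → ℝ with compact support contained in D, the limit lim_{γ→0⁺} (𝔐_A(F_γ), f) exists. Then for each such f there is a constant C > 0 such that |(𝔐_A(q_r), f)| ≤ C for all r ∈ (0, 1/2]. -/

import Mathlib

open MeasureTheory Filter

/-- `(𝔐_A(F), f) = ∫_{D∖A} f(z)·F(dist(z,A)) dz`, with respect to Lebesgue measure on ℂ. -/
noncomputable def Mint (D A : Set ℂ) (F : ℝ → ℝ) (f : ℂ → ℝ) : ℝ :=
  ∫ z in D \ A, f z * F (Metric.infDist z A)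

/-- `𝒥_r(s) = |log r|^{1/2} · 1_{(0,r)}(s)` -/
noncomputable def Jfun (r s : ℝ) : ℝ :=
  if s ∈ Set.Ioo 0 r then Real.sqrt |Real.log r| else 0

/-- `F_γ(s) = (γ/√(2π)) · 1_{(0,1)}(s) · |log s| · s^{γ²/2}` -/
noncomputable def Ffun (γ s : ℝ) : ℝ :=
  if s ∈ Set.Ioo (0:ℝ) 1 then γ / Real.sqrt (2 * Real.pi) * |Real.log s| * s ^ (γ ^ 2 / 2) else 0

/-- `q_r(s) = 1_{(0,1)}(s) · |log(max(r,s))| / |log r|^{1/2}` -/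
noncomputable def qfun (r s : ℝ) : ℝ :=
  if s ∈ Set.Ioo (0:ℝ) 1 then |Real.log (max r s)| / Real.sqrt |Real.log r| else 0

/-- If for every continuous compactly supported (in `D`) test function `f` the limit
`lim_{γ→0⁺} (𝔐_A(F_γ), f)` exists, then for each such `f`, `(𝔐_A(q_r), f)` stays bounded
as `r → 0`. -/
lemma one_le_sqrt_two_pi : 1 ≤ Real.sqrt (2 * Real.pi) := by
  rw [show (1:ℝ) = Real.sqrt 1 by simp]
  exact Real.sqrt_le_sqrt (by nlinarith [Real.pi_gt_three])

lemma sqrt_two_pi_pos : 0 < Real.sqrt (2 * Real.pi) :=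
  lt_of_lt_of_le one_pos one_le_sqrt_two_pi

lemma Ffun_eq (γ s : ℝ) (hs : s ∈ Set.Ioo (0:ℝ) 1) :
    Ffun γ s = γ / Real.sqrt (2 * Real.pi) * |Real.log s| *
      Real.exp (-(γ ^ 2 * |Real.log s|) / 2) := by
  rw [Ffun, if_pos hs, Real.rpow_def_of_pos hs.1]
  congr 2
  rw [abs_of_neg (Real.log_neg hs.1 hs.2)]
  ring

lemma Ffun_zero (γ s : ℝ) (hs : s ∉ Set.Ioo (0:ℝ) 1) : Ffun γ s = 0 := if_neg hs

lemma Ffun_nonneg (γ : ℝ) (hγ : 0 ≤ γ) (s : ℝ) : 0 ≤ Ffun γ s := by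
  by_cases hs : s ∈ Set.Ioo (0:ℝ) 1
  · rw [Ffun_eq γ s hs]
    have := sqrt_two_pi_pos
    positivity
  · rw [Ffun_zero γ s hs]

lemma Ffun_le (γ : ℝ) (hγ : 0 < γ) (s : ℝ) : Ffun γ s ≤ 2 / γ := by
  by_cases hs : s ∈ Set.Ioo (0:ℝ) 1
  · rw [Ffun_eq γ s hs]
    set t := |Real.log s| with ht
    have ht0 : 0 ≤ t := abs_nonneg _
    have hE : Real.exp (-(γ ^ 2 * t) / 2) = (Real.exp (γ ^ 2 * t / 2))⁻¹ := by
      rw [← Real.exp_neg]; ring_nf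
    have hkey : t * (Real.exp (γ ^ 2 * t / 2))⁻¹ ≤ 2 / γ ^ 2 := by
      have hle : γ ^ 2 * t / 2 ≤ Real.exp (γ ^ 2 * t / 2) := by
        linarith [Real.add_one_le_exp (γ ^ 2 * t / 2)]
      have h1 : (γ ^ 2 * t / 2) * (Real.exp (γ ^ 2 * t / 2))⁻¹ ≤ 1 := by
        rw [← div_eq_mul_inv]
        exact div_le_one_of_le₀ hle (Real.exp_pos _).le
      have hγ2 : (0:ℝ) < γ ^ 2 := by positivity
      have h2 := mul_le_mul_of_nonneg_left h1 (by positivity : (0:ℝ) ≤ 2 / γ ^ 2)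
      have h3 : (2 / γ ^ 2) * (γ ^ 2 * t / 2 * (Real.exp (γ ^ 2 * t / 2))⁻¹)
          = t * (Real.exp (γ ^ 2 * t / 2))⁻¹ := by field_simp
      linarith
    calc γ / Real.sqrt (2 * Real.pi) * t * Real.exp (-(γ ^ 2 * t) / 2)
        ≤ γ * t * Real.exp (-(γ ^ 2 * t) / 2) := by
          have h1 : γ / Real.sqrt (2 * Real.pi) ≤ γ :=
            div_le_self hγ.le one_le_sqrt_two_pi
          have h2 : (0:ℝ) ≤ t * Real.exp (-(γ ^ 2 * t) / 2) := by positivity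
          nlinarith [mul_le_mul_of_nonneg_right h1 h2]
      _ ≤ γ * (2 / γ ^ 2) := by
          rw [hE, mul_assoc]
          exact mul_le_mul_of_nonneg_left hkey hγ.le
      _ = 2 / γ := by field_simp
  · rw [Ffun_zero γ s hs]; positivity
lemma Ffun_integral (b : ℝ) (hb : 0 ≤ b) (s : ℝ) :
    ∫ γ in Set.Ioc (0:ℝ) b, Ffun γ s =
      if s ∈ Set.Ioo (0:ℝ) 1 then
        (1 - Real.exp (-(b ^ 2 * |Real.log s|) / 2)) / Real.sqrt (2 * Real.pi) else 0 := by
  by_cases hs : s ∈ Set.Ioo (0:ℝ) 1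
  · rw [if_pos hs]
    set t := |Real.log s| with ht
    have hcongr : ∫ γ in Set.Ioc (0:ℝ) b, Ffun γ s =
        ∫ γ in Set.Ioc (0:ℝ) b,
          γ / Real.sqrt (2 * Real.pi) * t * Real.exp (-(γ ^ 2 * t) / 2) :=
      integral_congr_ae (Filter.Eventually.of_forall fun γ => Ffun_eq γ s hs)
    rw [hcongr, ← intervalIntegral.integral_of_le hb]
    have hderiv : ∀ γ ∈ Set.uIcc (0:ℝ) b,
        HasDerivAt (fun x => -Real.exp (-(x ^ 2 * t) / 2) / Real.sqrt (2 * Real.pi))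
          (γ / Real.sqrt (2 * Real.pi) * t * Real.exp (-(γ ^ 2 * t) / 2)) γ := by
      intro γ _
      have h1 : HasDerivAt (fun x : ℝ => -(x ^ 2 * t) / 2) (-(2 * γ * t) / 2) γ := by
        have h2 := ((hasDerivAt_pow 2 γ).mul_const t).neg.div_const 2
        refine h2.congr_deriv ?_
        norm_num
      have h4 := h1.exp
      have h5 := h4.neg.div_const (Real.sqrt (2 * Real.pi))
      refine h5.congr_deriv ?_
      ring
    have hcont : Continuous fun γ : ℝ =>
        γ / Real.sqrt (2 * Real.pi) * t * Real.exp (-(γ ^ 2 * t) / 2) := by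
      apply Continuous.mul
      · exact (continuous_id.div_const _).mul continuous_const
      · exact Real.continuous_exp.comp (((continuous_pow 2).mul continuous_const).neg.div_const 2)
    rw [intervalIntegral.integral_eq_sub_of_hasDerivAt hderiv (hcont.intervalIntegrable 0 b)]
    have h0 : -((0:ℝ) ^ 2 * t) / 2 = 0 := by ring
    rw [h0, Real.exp_zero]
    ring
  · rw [if_neg hs]
    have : (fun γ => Ffun γ s) = fun _ => (0:ℝ) := funext fun γ => Ffun_zero γ s hs
    rw [this]
    simp

lemma aux_small (x : ℝ) (hx : 0 < x) (hx2 : x ≤ 1 / 2) :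
    2 * x ≤ 3 * (1 - Real.exp (-x)) := by
  have h1 : Real.exp (-x) * Real.exp x = 1 := by rw [← Real.exp_add]; simp
  have h2 : 1 + x ≤ Real.exp x := by linarith [Real.add_one_le_exp x]
  have h3 : (0:ℝ) < Real.exp (-x) := Real.exp_pos _
  nlinarith [mul_le_mul_of_nonneg_left h2 h3.le,
    mul_nonneg hx.le (by linarith : (0:ℝ) ≤ 1 - 2 * x)]

lemma aux_large (x : ℝ) (hx : 1 / 2 ≤ x) : 1 ≤ 3 * (1 - Real.exp (-x)) := by
  have h1 : Real.exp (-x) ≤ Real.exp (-(1/2 : ℝ)) := Real.exp_le_exp.2 (by linarith)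
  have h2 : Real.exp ((1:ℝ)/2) * Real.exp ((1:ℝ)/2) = Real.exp 1 := by
    rw [← Real.exp_add]; norm_num
  have h3 : (3:ℝ)/2 ≤ Real.exp ((1:ℝ)/2) := by
    nlinarith [Real.exp_one_gt_d9, Real.exp_pos ((1:ℝ)/2)]
  have h4 : Real.exp (-(1/2 : ℝ)) ≤ 2/3 := by
    rw [Real.exp_neg]
    have := inv_anti₀ (by norm_num : (0:ℝ) < 3/2) h3
    linarith [this]
  linarith

lemma core_ineq (t T : ℝ) (ht : 0 < t) (hT : 0 < T) :
    min t T ≤ 3 * T * (1 - Real.exp (-(T⁻¹ * t) / 2)) := by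
  have hx : -(T⁻¹ * t) / 2 = -(t / (2 * T)) := by
    field_simp
  rw [hx]
  set x := t / (2 * T) with hxdef
  have hx0 : 0 < x := by positivity
  rcases le_total t T with h | h
  · rw [min_eq_left h]
    have hxh : x ≤ 1 / 2 := by
      rw [hxdef, div_le_div_iff₀ (by positivity) (by norm_num)]
      linarith
    have := aux_small x hx0 hxh
    have htx : t = 2 * T * x := by rw [hxdef]; field_simp
    nlinarith
  · rw [min_eq_right h]
    have hxh : 1 / 2 ≤ x := by
      rw [hxdef, le_div_iff₀ (by positivity)]
      linarith
    have := aux_large x hxh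
    nlinarith
lemma qfun_nonneg (r s : ℝ) : 0 ≤ qfun r s := by
  rw [qfun]
  split
  · positivity
  · exact le_refl 0

lemma T_pos {r : ℝ} (hr : r ∈ Set.Ioc (0:ℝ) (1/2)) : Real.log 2 ≤ -Real.log r := by
  have h1 : Real.log r ≤ Real.log (1/2) := Real.log_le_log hr.1 hr.2
  rw [one_div, Real.log_inv] at h1
  linarith

lemma T_pos' {r : ℝ} (hr : r ∈ Set.Ioc (0:ℝ) (1/2)) : 0 < -Real.log r :=
  lt_of_lt_of_le (Real.log_pos one_lt_two) (T_pos hr)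

lemma abs_log_eq {r : ℝ} (hr : r ∈ Set.Ioc (0:ℝ) (1/2)) : |Real.log r| = -Real.log r :=
  abs_of_neg (Real.log_neg hr.1 (lt_of_le_of_lt hr.2 (by norm_num)))

lemma abs_log_max_eq_min {r : ℝ} (hr : r ∈ Set.Ioc (0:ℝ) (1/2)) {s : ℝ}
    (hs : s ∈ Set.Ioo (0:ℝ) 1) :
    |Real.log (max r s)| = min (-Real.log s) (-Real.log r) := by
  have hr1 : r < 1 := lt_of_le_of_lt hr.2 (by norm_num)
  rcases le_total r s with h | h
  · rw [max_eq_right h, abs_of_neg (Real.log_neg hs.1 hs.2), min_eq_left]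
    have := Real.log_le_log hr.1 h
    linarith
  · rw [max_eq_left h, abs_of_neg (Real.log_neg hr.1 hr1), min_eq_right]
    have := Real.log_le_log hs.1 h
    linarith

lemma qfun_le {r : ℝ} (hr : r ∈ Set.Ioc (0:ℝ) (1/2)) (s : ℝ) :
    qfun r s ≤ Real.sqrt (-Real.log r) := by
  have hT0 := T_pos' hr
  by_cases hs : s ∈ Set.Ioo (0:ℝ) 1
  · rw [qfun, if_pos hs, abs_log_eq hr, abs_log_max_eq_min hr hs]
    calc min (-Real.log s) (-Real.log r) / Real.sqrt (-Real.log r)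
        ≤ (-Real.log r) / Real.sqrt (-Real.log r) := by
          gcongr
          exact min_le_right _ _
      _ = Real.sqrt (-Real.log r) := Real.div_sqrt
  · rw [qfun, if_neg hs]
    positivity

lemma qfun_le_kernel {r : ℝ} (hr : r ∈ Set.Ioc (0:ℝ) (1/2)) (s : ℝ) :
    qfun r s ≤ 3 * Real.sqrt (2 * Real.pi) * Real.sqrt (-Real.log r) *
      (if s ∈ Set.Ioo (0:ℝ) 1 then
        (1 - Real.exp (-(((Real.sqrt (-Real.log r))⁻¹) ^ 2 * |Real.log s|) / 2)) /
          Real.sqrt (2 * Real.pi) else 0) := by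
  have hT0 := T_pos' hr
  set T := -Real.log r with hTdef
  have hsT : Real.sqrt T * Real.sqrt T = T := Real.mul_self_sqrt hT0.le
  have hsT0 : 0 < Real.sqrt T := Real.sqrt_pos.2 hT0
  by_cases hs : s ∈ Set.Ioo (0:ℝ) 1
  · rw [qfun, if_pos hs, if_pos hs, abs_log_eq hr, abs_log_max_eq_min hr hs]
    set t := -Real.log s with htdef
    have ht0 : 0 < t := by
      have := Real.log_neg hs.1 hs.2
      rw [htdef]; linarith
    have hb2 : ((Real.sqrt T)⁻¹) ^ 2 = T⁻¹ := by
      rw [inv_pow, sq, hsT]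
    have habs : |Real.log s| = t := by
      rw [htdef, abs_of_neg (Real.log_neg hs.1 hs.2)]
    rw [hb2, habs]
    have hcore := core_ineq t T ht0 hT0
    have hsimp : 3 * Real.sqrt (2 * Real.pi) * Real.sqrt T *
        ((1 - Real.exp (-(T⁻¹ * t) / 2)) / Real.sqrt (2 * Real.pi)) =
        3 * Real.sqrt T * (1 - Real.exp (-(T⁻¹ * t) / 2)) := by
      field_simp
    rw [hsimp, div_le_iff₀ hsT0]
    calc min t T ≤ 3 * T * (1 - Real.exp (-(T⁻¹ * t) / 2)) := hcore
      _ = 3 * Real.sqrt T * (1 - Real.exp (-(T⁻¹ * t) / 2)) * Real.sqrt T := by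
          linear_combination (-(3 * (1 - Real.exp (-(T⁻¹ * t) / 2)))) * hsT
  · rw [qfun, if_neg hs, if_neg hs, mul_zero]
lemma Ffun_joint_measurable : Measurable fun q : ℝ × ℝ => Ffun q.1 q.2 := by
  have heq : (fun q : ℝ × ℝ => Ffun q.1 q.2) = fun q =>
      if q.2 ∈ Set.Ioo (0:ℝ) 1 then
        q.1 / Real.sqrt (2 * Real.pi) * |Real.log q.2| *
          Real.exp (-(q.1 ^ 2 * |Real.log q.2|) / 2) else 0 := by
    funext q
    by_cases h : q.2 ∈ Set.Ioo (0:ℝ) 1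
    · rw [if_pos h]; exact Ffun_eq _ _ h
    · rw [if_neg h]; exact Ffun_zero _ _ h
  rw [heq]
  apply Measurable.ite (measurable_snd measurableSet_Ioo)
  · apply Measurable.mul
    · exact (measurable_fst.div_const _).mul (Real.measurable_log.comp measurable_snd).abs
    · exact Real.measurable_exp.comp
        (((measurable_fst.pow_const 2).mul
          (Real.measurable_log.comp measurable_snd).abs).neg.div_const 2)
  · exact measurable_const

lemma Ffun_slice_integrable (s : ℝ) (b : ℝ) :
    Integrable (fun γ => Ffun γ s) ((volume : Measure ℝ).restrict (Set.Ioc 0 b)) := by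
  by_cases hs : s ∈ Set.Ioo (0:ℝ) 1
  · have heq : (fun γ => Ffun γ s) = fun γ =>
        γ / Real.sqrt (2 * Real.pi) * |Real.log s| *
          Real.exp (-(γ ^ 2 * |Real.log s|) / 2) := funext fun γ => Ffun_eq γ s hs
    rw [heq]
    apply Continuous.integrableOn_Ioc
    apply Continuous.mul
    · exact (continuous_id.div_const _).mul continuous_const
    · exact Real.continuous_exp.comp (((continuous_pow 2).mul continuous_const).neg.div_const 2)
  · have heq : (fun γ => Ffun γ s) = fun _ => (0:ℝ) := funext fun γ => Ffun_zero γ s hs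
    rw [heq]
    exact integrable_const 0

lemma swap_lemma (D A : Set ℂ) (g : ℂ → ℝ) (hg : Continuous g)
    (hgi : Integrable g ((volume : Measure ℂ).restrict (D \ A))) (b : ℝ) (hb : 0 < b) :
    ∫ z in D \ A, ∫ γ in Set.Ioc (0:ℝ) b, g z * Ffun γ (Metric.infDist z A) =
      ∫ γ in Set.Ioc (0:ℝ) b, Mint D A (Ffun γ) g := by
  set μ := (volume : Measure ℂ).restrict (D \ A)
  set ν := (volume : Measure ℝ).restrict (Set.Ioc (0:ℝ) b)
  have hmeas : AEStronglyMeasurable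
      (Function.uncurry fun (z : ℂ) (γ : ℝ) => g z * Ffun γ (Metric.infDist z A))
      (μ.prod ν) := by
    apply Measurable.aestronglyMeasurable
    apply Measurable.mul
    · exact (hg.comp continuous_fst).measurable
    · exact Ffun_joint_measurable.comp
        (measurable_snd.prodMk
          ((Metric.continuous_infDist_pt A).comp continuous_fst).measurable)
  have hslice : ∀ z : ℂ, Integrable (fun γ => g z * Ffun γ (Metric.infDist z A)) ν :=
    fun z => (Ffun_slice_integrable (Metric.infDist z A) b).const_mul (g z)
  have hnorm_eq : ∀ z : ℂ, (∫ γ, ‖g z * Ffun γ (Metric.infDist z A)‖ ∂ν) =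
      |g z| * (if Metric.infDist z A ∈ Set.Ioo (0:ℝ) 1 then
        (1 - Real.exp (-(b ^ 2 * |Real.log (Metric.infDist z A)|) / 2)) /
          Real.sqrt (2 * Real.pi) else 0) := by
    intro z
    rw [← Ffun_integral b hb.le]
    have hcongr : ∀ γ ∈ Set.Ioc (0:ℝ) b, ‖g z * Ffun γ (Metric.infDist z A)‖ =
        |g z| * Ffun γ (Metric.infDist z A) := by
      intro γ hγ
      rw [Real.norm_eq_abs, abs_mul, abs_of_nonneg (Ffun_nonneg γ hγ.1.le _)]
    rw [setIntegral_congr_fun measurableSet_Ioc hcongr, integral_const_mul]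
  have hw01 : ∀ s : ℝ, (0:ℝ) ≤ (if s ∈ Set.Ioo (0:ℝ) 1 then
      (1 - Real.exp (-(b ^ 2 * |Real.log s|) / 2)) / Real.sqrt (2 * Real.pi) else 0) ∧
      (if s ∈ Set.Ioo (0:ℝ) 1 then
      (1 - Real.exp (-(b ^ 2 * |Real.log s|) / 2)) / Real.sqrt (2 * Real.pi) else 0) ≤ 1 := by
    intro s
    split
    · have he1 : Real.exp (-(b ^ 2 * |Real.log s|) / 2) ≤ 1 := by
        apply Real.exp_le_one_iff.2
        have : (0:ℝ) ≤ b ^ 2 * |Real.log s| := by positivity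
        linarith
      have he0 : (0:ℝ) < Real.exp (-(b ^ 2 * |Real.log s|) / 2) := Real.exp_pos _
      constructor
      · apply div_nonneg (by linarith) sqrt_two_pi_pos.le
      · apply div_le_one_of_le₀ ?_ sqrt_two_pi_pos.le
        linarith [one_le_sqrt_two_pi]
    · exact ⟨le_refl 0, zero_le_one⟩
  simp only [Real.norm_eq_abs] at hnorm_eq
  have hint2 : Integrable (fun z => ∫ γ, ‖g z * Ffun γ (Metric.infDist z A)‖ ∂ν) μ := by
    apply Integrable.mono' hgi.abs (hmeas.norm.integral_prod_right')
    refine Filter.Eventually.of_forall fun z => ?_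
    simp only [Function.uncurry_apply_pair, Real.norm_eq_abs]
    rw [hnorm_eq z]
    have h01 := hw01 (Metric.infDist z A)
    rw [abs_of_nonneg (mul_nonneg (abs_nonneg _) h01.1)]
    calc |g z| * _ ≤ |g z| * 1 := mul_le_mul_of_nonneg_left h01.2 (abs_nonneg _)
      _ = |g z| := mul_one _
  have hprod : Integrable
      (Function.uncurry fun (z : ℂ) (γ : ℝ) => g z * Ffun γ (Metric.infDist z A))
      (μ.prod ν) :=
    (integrable_prod_iff hmeas).2 ⟨Filter.Eventually.of_forall hslice, hint2⟩
  exact integral_integral_swap hprod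
lemma integrable_q (D A : Set ℂ) {r : ℝ} (hr : r ∈ Set.Ioc (0:ℝ) (1/2)) (g : ℂ → ℝ)
    (hgi : Integrable g ((volume : Measure ℂ).restrict (D \ A))) :
    Integrable (fun z => g z * qfun r (Metric.infDist z A))
      ((volume : Measure ℂ).restrict (D \ A)) := by
  have hqm : Measurable fun z : ℂ => qfun r (Metric.infDist z A) := by
    have h1 : Measurable (qfun r) := by
      unfold qfun
      apply Measurable.ite measurableSet_Ioo ?_ measurable_const
      exact ((Real.measurable_log.comp
        ((continuous_const.max continuous_id).measurable)).abs).div_const _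
    exact h1.comp (Metric.continuous_infDist_pt A).measurable
  have hbd : ∀ z : ℂ, ‖qfun r (Metric.infDist z A)‖ ≤ Real.sqrt (-Real.log r) := by
    intro z
    rw [Real.norm_eq_abs, abs_of_nonneg (qfun_nonneg _ _)]
    exact qfun_le hr _
  have := hgi.bdd_mul hqm.aestronglyMeasurable (Filter.Eventually.of_forall hbd)
  exact this.congr (Filter.Eventually.of_forall fun z => mul_comm _ _)

lemma exists_bound (D A : Set ℂ) (g : ℂ → ℝ) (hg0 : ∀ z, 0 ≤ g z)
    (hgi : Integrable g ((volume : Measure ℂ).restrict (D \ A))) (L : ℝ)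
    (hL : Tendsto (fun γ => Mint D A (Ffun γ) g) (nhdsWithin 0 (Set.Ioi 0)) (nhds L)) :
    ∃ M : ℝ, 0 ≤ M ∧ ∀ γ ∈ Set.Ioc (0:ℝ) 2, Mint D A (Ffun γ) g ≤ M := by
  have hev : ∀ᶠ γ in nhdsWithin 0 (Set.Ioi 0), Mint D A (Ffun γ) g < L + 1 :=
    hL.eventually_lt_const (lt_add_one L)
  rw [eventually_nhdsWithin_iff, Metric.eventually_nhds_iff] at hev
  obtain ⟨δ, hδ0, hδ⟩ := hev
  have hgint0 : 0 ≤ ∫ z in D \ A, g z := integral_nonneg hg0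
  refine ⟨max (|L| + 1) ((2/δ) * ∫ z in D \ A, g z), ?_, ?_⟩
  · exact le_trans (by positivity) (le_max_left _ _)
  · rintro γ ⟨hγ0, hγ2⟩
    by_cases hcase : γ < δ
    · have h1 : Mint D A (Ffun γ) g < L + 1 := by
        apply hδ ?_ (Set.mem_Ioi.2 hγ0)
        rw [Real.dist_eq, sub_zero, abs_of_pos hγ0]
        exact hcase
      have h2 : L + 1 ≤ |L| + 1 := by linarith [le_abs_self L]
      exact le_trans (le_of_lt (lt_of_lt_of_le h1 h2)) (le_max_left _ _)
    · push_neg at hcase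
      have hb : Mint D A (Ffun γ) g ≤ ∫ z in D \ A, (2/δ) * g z := by
        apply integral_mono_of_nonneg
        · exact Filter.Eventually.of_forall fun z =>
            mul_nonneg (hg0 z) (Ffun_nonneg γ hγ0.le _)
        · exact hgi.const_mul _
        · refine Filter.Eventually.of_forall fun z => ?_
          have hF2 : Ffun γ (Metric.infDist z A) ≤ 2/δ := by
            calc Ffun γ (Metric.infDist z A) ≤ 2/γ := Ffun_le γ hγ0 _
              _ ≤ 2/δ := by gcongr
          calc g z * Ffun γ (Metric.infDist z A) ≤ g z * (2/δ) :=
                mul_le_mul_of_nonneg_left hF2 (hg0 z)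
            _ = (2/δ) * g z := mul_comm _ _
      rw [integral_const_mul] at hb
      exact le_trans hb (le_max_right _ _)

lemma Mint_q_bound (D A : Set ℂ) (g : ℂ → ℝ) (hg : Continuous g) (hg0 : ∀ z, 0 ≤ g z)
    (hgi : Integrable g ((volume : Measure ℂ).restrict (D \ A))) (M : ℝ) (hM0 : 0 ≤ M)
    (hM : ∀ γ ∈ Set.Ioc (0:ℝ) 2, Mint D A (Ffun γ) g ≤ M) {r : ℝ}
    (hr : r ∈ Set.Ioc (0:ℝ) (1/2)) :
    Mint D A (qfun r) g ≤ 3 * Real.sqrt (2 * Real.pi) * M := by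
  have hT0 : 0 < -Real.log r := T_pos' hr
  have hTlog := T_pos hr
  have hsT0 : 0 < Real.sqrt (-Real.log r) := Real.sqrt_pos.2 hT0
  set b : ℝ := (Real.sqrt (-Real.log r))⁻¹ with hbdef
  have hb0 : 0 < b := inv_pos.2 hsT0
  have hb2 : b ≤ 2 := by
    have h14 : (1:ℝ)/2 ≤ Real.sqrt (-Real.log r) := by
      rw [show (1:ℝ)/2 = Real.sqrt (1/4) by
        rw [show (1:ℝ)/4 = (1/2)^2 by norm_num, Real.sqrt_sq (by norm_num : (0:ℝ) ≤ 1/2)]]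
      apply Real.sqrt_le_sqrt
      nlinarith [Real.log_two_gt_d9]
    calc b ≤ ((1:ℝ)/2)⁻¹ := by
          rw [hbdef]
          exact inv_anti₀ (by norm_num) h14
      _ = 2 := by norm_num
  set K : ℂ → ℝ := fun z => if Metric.infDist z A ∈ Set.Ioo (0:ℝ) 1 then
      (1 - Real.exp (-(b ^ 2 * |Real.log (Metric.infDist z A)|) / 2)) /
        Real.sqrt (2 * Real.pi) else 0 with hKdef
  have hK01 : ∀ z, 0 ≤ K z ∧ K z ≤ 1 := by
    intro z
    rw [hKdef]
    dsimp only
    split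
    · have he1 : Real.exp (-(b ^ 2 * |Real.log (Metric.infDist z A)|) / 2) ≤ 1 := by
        apply Real.exp_le_one_iff.2
        have : (0:ℝ) ≤ b ^ 2 * |Real.log (Metric.infDist z A)| := by positivity
        linarith
      have he0 : (0:ℝ) < Real.exp (-(b ^ 2 * |Real.log (Metric.infDist z A)|) / 2) :=
        Real.exp_pos _
      constructor
      · apply div_nonneg (by linarith) sqrt_two_pi_pos.le
      · apply div_le_one_of_le₀ ?_ sqrt_two_pi_pos.le
        linarith [one_le_sqrt_two_pi]
    · exact ⟨le_refl 0, zero_le_one⟩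
  have hKmeas : Measurable K := by
    rw [hKdef]
    apply Measurable.ite
    · exact (Metric.continuous_infDist_pt A).measurable measurableSet_Ioo
    · apply Measurable.div_const
      apply Measurable.const_sub
      apply Real.measurable_exp.comp
      apply Measurable.div_const
      apply Measurable.neg
      exact ((Real.measurable_log.comp
        (Metric.continuous_infDist_pt A).measurable).abs).const_mul _
    · exact measurable_const
  -- step 1 : Mint (qfun r) g ≤ ∫ g z * (3 √(2π) √T * K z)
  have hKint : Integrable (fun z => g z * (3 * Real.sqrt (2 * Real.pi) *
      Real.sqrt (-Real.log r) * K z)) ((volume : Measure ℂ).restrict (D \ A)) := by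
    have h1 := hgi.bdd_mul
      ((hKmeas.const_mul (3 * Real.sqrt (2 * Real.pi) * Real.sqrt (-Real.log r))).aestronglyMeasurable)
      (Filter.Eventually.of_forall fun z => by
        have h01 := hK01 z
        rw [Real.norm_eq_abs, abs_of_nonneg (mul_nonneg (by positivity) h01.1)]
        calc 3 * Real.sqrt (2 * Real.pi) * Real.sqrt (-Real.log r) * K z
            ≤ 3 * Real.sqrt (2 * Real.pi) * Real.sqrt (-Real.log r) * 1 :=
              mul_le_mul_of_nonneg_left h01.2 (by positivity)
          _ = _ := mul_one _)
    exact h1.congr (Filter.Eventually.of_forall fun z => mul_comm _ _)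
  have step1 : Mint D A (qfun r) g ≤
      ∫ z in D \ A, g z * (3 * Real.sqrt (2 * Real.pi) * Real.sqrt (-Real.log r) * K z) := by
    apply integral_mono_of_nonneg
    · exact Filter.Eventually.of_forall fun z => mul_nonneg (hg0 z) (qfun_nonneg _ _)
    · exact hKint
    · exact Filter.Eventually.of_forall fun z =>
        mul_le_mul_of_nonneg_left (qfun_le_kernel hr _) (hg0 z)
  -- step 2 : pull out the constant
  have step2 : ∫ z in D \ A, g z * (3 * Real.sqrt (2 * Real.pi) *
      Real.sqrt (-Real.log r) * K z) =
      3 * Real.sqrt (2 * Real.pi) * Real.sqrt (-Real.log r) * ∫ z in D \ A, g z * K z := by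
    rw [← integral_const_mul]
    apply integral_congr_ae
    exact Filter.Eventually.of_forall fun z => by ring
  -- step 3 : K z as an integral of Ffun
  have step3 : ∫ z in D \ A, g z * K z =
      ∫ z in D \ A, ∫ γ in Set.Ioc (0:ℝ) b, g z * Ffun γ (Metric.infDist z A) := by
    apply integral_congr_ae
    refine Filter.Eventually.of_forall fun z => ?_
    show g z * K z = ∫ γ in Set.Ioc (0:ℝ) b, g z * Ffun γ (Metric.infDist z A)
    rw [integral_const_mul, Ffun_integral b hb0.le]
  -- step 4 : swap
  have step4 := swap_lemma D A g hg hgi b hb0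
  -- step 5 : bound the γ-integral
  have step5 : ∫ γ in Set.Ioc (0:ℝ) b, Mint D A (Ffun γ) g ≤ M * b := by
    have hconst : ∫ γ in Set.Ioc (0:ℝ) b, M ∂(volume : Measure ℝ) = M * b := by
      rw [setIntegral_const, Real.volume_real_Ioc, smul_eq_mul]
      rw [max_eq_left (by linarith : (0:ℝ) ≤ b - 0)]
      ring
    rw [← hconst]
    apply integral_mono_of_nonneg
    · exact (ae_restrict_iff' measurableSet_Ioc).2 (Filter.Eventually.of_forall fun γ hγ =>
        integral_nonneg fun z => mul_nonneg (hg0 z) (Ffun_nonneg γ hγ.1.le _))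
    · exact integrableOn_const (by rw [Real.volume_Ioc]; exact ENNReal.ofReal_ne_top)
    · exact (ae_restrict_iff' measurableSet_Ioc).2 (Filter.Eventually.of_forall fun γ hγ =>
        hM γ ⟨hγ.1, le_trans hγ.2 hb2⟩)
  -- assemble
  have hfinal : 3 * Real.sqrt (2 * Real.pi) * Real.sqrt (-Real.log r) * (M * b) =
      3 * Real.sqrt (2 * Real.pi) * M := by
    rw [hbdef]
    field_simp
  calc Mint D A (qfun r) g
      ≤ 3 * Real.sqrt (2 * Real.pi) * Real.sqrt (-Real.log r) * ∫ z in D \ A, g z * K z := by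
        rw [← step2]; exact step1
    _ = 3 * Real.sqrt (2 * Real.pi) * Real.sqrt (-Real.log r) *
        ∫ γ in Set.Ioc (0:ℝ) b, Mint D A (Ffun γ) g := by rw [step3, step4]
    _ ≤ 3 * Real.sqrt (2 * Real.pi) * Real.sqrt (-Real.log r) * (M * b) :=
        mul_le_mul_of_nonneg_left step5 (by positivity)
    _ = 3 * Real.sqrt (2 * Real.pi) * M := hfinal
theorem stmt3 (D A : Set ℂ) (hD : IsOpen D) (hDb : Bornology.IsBounded D)
    (hA : IsClosed A) (hAne : A.Nonempty) (hAD : A ⊆ closure D)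
    (hF : ∀ f : ℂ → ℝ, Continuous f → HasCompactSupport f → tsupport f ⊆ D →
      ∃ L : ℝ, Tendsto (fun γ => Mint D A (Ffun γ) f) (nhdsWithin 0 (Set.Ioi 0)) (nhds L)) :
    ∀ f : ℂ → ℝ, Continuous f → HasCompactSupport f → tsupport f ⊆ D →
      ∃ C : ℝ, 0 < C ∧ ∀ r ∈ Set.Ioc (0:ℝ) (1 / 2), |Mint D A (qfun r) f| ≤ C := by
  intro f hf hfc hfs
  set g₁ : ℂ → ℝ := fun z => max (f z) 0 with hg₁def
  set g₂ : ℂ → ℝ := fun z => max (-f z) 0 with hg₂def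
  have hc₁ : Continuous g₁ := hf.max continuous_const
  have hc₂ : Continuous g₂ := hf.neg.max continuous_const
  have hsupp₁ : Function.support g₁ ⊆ Function.support f := by
    intro z hz
    simp only [Function.mem_support] at hz ⊢
    intro h0
    apply hz
    rw [hg₁def]; simp [h0]
  have hsupp₂ : Function.support g₂ ⊆ Function.support f := by
    intro z hz
    simp only [Function.mem_support] at hz ⊢
    intro h0
    apply hz
    rw [hg₂def]; simp [h0]
  have hcs₁ : HasCompactSupport g₁ := hfc.mono hsupp₁
  have hcs₂ : HasCompactSupport g₂ := hfc.mono hsupp₂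
  have hts₁ : tsupport g₁ ⊆ D := le_trans (closure_mono hsupp₁) hfs
  have hts₂ : tsupport g₂ ⊆ D := le_trans (closure_mono hsupp₂) hfs
  have hg₁0 : ∀ z, 0 ≤ g₁ z := fun z => le_max_right _ _
  have hg₂0 : ∀ z, 0 ≤ g₂ z := fun z => le_max_right _ _
  have hgi₁ : Integrable g₁ ((volume : Measure ℂ).restrict (D \ A)) :=
    (hc₁.integrable_of_hasCompactSupport hcs₁).restrict
  have hgi₂ : Integrable g₂ ((volume : Measure ℂ).restrict (D \ A)) :=
    (hc₂.integrable_of_hasCompactSupport hcs₂).restrict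
  obtain ⟨L₁, hL₁⟩ := hF g₁ hc₁ hcs₁ hts₁
  obtain ⟨L₂, hL₂⟩ := hF g₂ hc₂ hcs₂ hts₂
  obtain ⟨M₁, hM₁0, hM₁⟩ := exists_bound D A g₁ hg₁0 hgi₁ L₁ hL₁
  obtain ⟨M₂, hM₂0, hM₂⟩ := exists_bound D A g₂ hg₂0 hgi₂ L₂ hL₂
  refine ⟨3 * Real.sqrt (2 * Real.pi) * (M₁ + M₂) + 1, by positivity, ?_⟩
  intro r hr
  have hb₁ := Mint_q_bound D A g₁ hc₁ hg₁0 hgi₁ M₁ hM₁0 hM₁ hr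
  have hb₂ := Mint_q_bound D A g₂ hc₂ hg₂0 hgi₂ M₂ hM₂0 hM₂ hr
  have hn₁ : 0 ≤ Mint D A (qfun r) g₁ :=
    integral_nonneg fun z => mul_nonneg (hg₁0 z) (qfun_nonneg _ _)
  have hn₂ : 0 ≤ Mint D A (qfun r) g₂ :=
    integral_nonneg fun z => mul_nonneg (hg₂0 z) (qfun_nonneg _ _)
  have hsplit : Mint D A (qfun r) f = Mint D A (qfun r) g₁ - Mint D A (qfun r) g₂ := by
    unfold Mint
    rw [← integral_sub (integrable_q D A hr g₁ hgi₁) (integrable_q D A hr g₂ hgi₂)]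
    apply integral_congr_ae
    refine Filter.Eventually.of_forall fun z => ?_
    have hdiff : g₁ z - g₂ z = f z := max_zero_sub_max_neg_zero_eq_self (f z)
    show f z * qfun r (Metric.infDist z A) =
      g₁ z * qfun r (Metric.infDist z A) - g₂ z * qfun r (Metric.infDist z A)
    rw [← hdiff]
    ring
  rw [hsplit]
  have hsq : (0:ℝ) ≤ 3 * Real.sqrt (2 * Real.pi) := by positivity
  rw [abs_le]
  constructor
  · have : 3 * Real.sqrt (2 * Real.pi) * M₂ ≤ 3 * Real.sqrt (2 * Real.pi) * (M₁ + M₂) := by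
      nlinarith
    linarith
  · have : 3 * Real.sqrt (2 * Real.pi) * M₁ ≤ 3 * Real.sqrt (2 * Real.pi) * (M₁ + M₂) := by
      nlinarith
    linarith
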